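/- Let A be a Hopf algebra over ℂ[ħ] and A' its Drinfeld–Gavarini dual, A' = { a ∈ A : δ_n(a) ∈ ħ^n A^{⊗n} for all n ≥ 1 }. Then for any a, b ∈ A', the commutator [a,b] = ab − ba lies in ħ·A'. -/

import Mathlib

open TensorProduct

variable (R : Type*) [CommRing R] (A : Type*) [Ring A] [Bialgebra R A]

/-- `TpowM R A n` is the `(n+1)`-fold tensor power `A ⊗ ⋯ ⊗ A` (so `TpowM R A 0 = A`),
bundled as an object of the category of `R`-modules. -/
noncomputable def TpowM : ℕ → ModuleCat R
  | 0 => ModuleCat.of R A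
  | (n + 1) => ModuleCat.of R (A ⊗[R] (TpowM n))

/-- The iterated coproduct `Δ^{n+1} : A → A^{⊗(n+1)}`, defined by `Δ¹ = id` and
`Δ^{n+1} = (Δ ⊗ id^{⊗(n−1)}) ∘ Δ^n` (with the evident reassociation). -/
noncomputable def iterComul : (n : ℕ) → (A →ₗ[R] TpowM R A n)
  | 0 => LinearMap.id
  | 1 => Coalgebra.comul
  | (n + 2) =>
      (TensorProduct.assoc R A A (TpowM R A n)).toLinearMap ∘ₗ
        (TensorProduct.map (Coalgebra.comul (R := R) (A := A)) LinearMap.id) ∘ₗ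
          iterComul (n + 1)

/-- The projection `id − η∘ε : A → A`, `a ↦ a − ε(a)·1`. -/
noncomputable def projCounit : A →ₗ[R] A :=
  LinearMap.id - (Algebra.linearMap R A) ∘ₗ (Coalgebra.counit (R := R) (A := A))

/-- `(id − η∘ε)^{⊗(n+1)}` on the `(n+1)`-fold tensor power. -/
noncomputable def projPow : (n : ℕ) → (TpowM R A n →ₗ[R] TpowM R A n)
  | 0 => projCounit R A
  | (n + 1) => TensorProduct.map (projCounit R A) (projPow n)

/-- `δ_{n+1} := (id − η∘ε)^{⊗(n+1)} ∘ Δ^{n+1} : A → A^{⊗(n+1)}`. -/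
noncomputable def deltaMap (n : ℕ) : A →ₗ[R] TpowM R A n :=
  projPow R A n ∘ₗ iterComul R A n

-- chunk 1 tests
example : (TpowM R A 0 : Type _) = A := rfl
example (n : ℕ) : (TpowM R A (n+1) : Type _) = (A ⊗[R] (TpowM R A n)) := rfl

/-- `gmap true = π = id − ηε`, `gmap false = ηε`. -/
noncomputable def gmap (b : Bool) : A →ₗ[R] A :=
  if b then projCounit R A else (Algebra.linearMap R A) ∘ₗ (Coalgebra.counit (R := R) (A := A))

/-- mixed tensor power of `π` and `ηε` composed with the iterated comultiplication,
with slots given by a boolean mask. -/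
noncomputable def dm : (n : ℕ) → (Fin (n+1) → Bool) → (A →ₗ[R] TpowM R A n)
  | 0, s => gmap R A (s 0)
  | (n+1), s =>
      (TensorProduct.map (gmap R A (s 0)) (dm n (fun i => s i.succ))) ∘ₗ
        (Coalgebra.comul (R := R) (A := A))

/-- Multiplication on the tensor powers, as a bilinear map. -/
noncomputable def mulT : (n : ℕ) → (TpowM R A n →ₗ[R] TpowM R A n →ₗ[R] TpowM R A n)
  | 0 => LinearMap.mul R A
  | (n+1) =>
      TensorProduct.lift
        ((((TensorProduct.mapBilinear (RingHom.id R) A (TpowM R A n) A (TpowM R A n)).comp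
            (LinearMap.mul R A))).compl₂ (mulT n))

lemma mulT_tmul (n : ℕ) (a b : A) (x y : TpowM R A n) :
    mulT R A (n+1) (a ⊗ₜ x) (b ⊗ₜ y) = (a * b) ⊗ₜ (mulT R A n x y) := by
  rfl
lemma mulT_succ_zero_l (n : ℕ) (y : A ⊗[R] TpowM R A n) :
    mulT R A (n+1) (0 : A ⊗[R] TpowM R A n) y = 0 := LinearMap.map_zero₂ _ _
lemma mulT_succ_zero_r (n : ℕ) (x : A ⊗[R] TpowM R A n) :
    mulT R A (n+1) x (0 : A ⊗[R] TpowM R A n) = 0 := map_zero _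
lemma mulT_succ_add_l (n : ℕ) (x₁ x₂ y : A ⊗[R] TpowM R A n) :
    mulT R A (n+1) (x₁ + x₂ : A ⊗[R] TpowM R A n) y =
      mulT R A (n+1) x₁ y + mulT R A (n+1) x₂ y := LinearMap.map_add₂ _ _ _ _
lemma mulT_succ_add_r (n : ℕ) (x y₁ y₂ : A ⊗[R] TpowM R A n) :
    mulT R A (n+1) x (y₁ + y₂ : A ⊗[R] TpowM R A n) =
      mulT R A (n+1) x y₁ + mulT R A (n+1) x y₂ := map_add _ _ _
lemma dm_zero (s : Fin 1 → Bool) (u : A) : dm R A 0 s u = gmap R A (s 0) u := rfl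

lemma dm_succ (n : ℕ) (s : Fin (n+2) → Bool) (u : A) :
    dm R A (n+1) s u =
      (TensorProduct.map (gmap R A (s 0)) (dm R A n (fun i => s i.succ)))
        (Coalgebra.comul u) := rfl

-- chunk 2
lemma rTensor_eq_map {M N P : Type*} [AddCommGroup M] [AddCommGroup N] [AddCommGroup P]
    [Module R M] [Module R N] [Module R P] (f : M →ₗ[R] N) :
    f.rTensor P = TensorProduct.map f LinearMap.id := rfl

lemma lTensor_eq_map {M N P : Type*} [AddCommGroup M] [AddCommGroup N] [AddCommGroup P]
    [Module R M] [Module R N] [Module R P] (f : M →ₗ[R] N) :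
    f.lTensor P = TensorProduct.map LinearMap.id f := rfl

lemma iterComul_succ : ∀ n : ℕ, iterComul R A (n+1) =
    (TensorProduct.map LinearMap.id (iterComul R A n)) ∘ₗ (Coalgebra.comul (R := R) (A := A))
  | 0 => by
      show (Coalgebra.comul (R := R) (A := A)) = _
      erw [show (iterComul R A 0) = LinearMap.id from rfl, TensorProduct.map_id,
        LinearMap.id_comp]
  | (n+1) => by
      have h1 : (TensorProduct.map (Coalgebra.comul (R := R) (A := A))
            (LinearMap.id : TpowM R A n →ₗ[R] TpowM R A n)) ∘ₗ
            (TensorProduct.map (LinearMap.id : A →ₗ[R] A) (iterComul R A n)) =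
          (TensorProduct.map (LinearMap.id : A ⊗[R] A →ₗ[R] A ⊗[R] A) (iterComul R A n)) ∘ₗ
            (TensorProduct.map (Coalgebra.comul (R := R) (A := A)) (LinearMap.id : A →ₗ[R] A)) := by
        apply TensorProduct.ext'
        intro x y
        simp
      have h2 : (TensorProduct.assoc R A A (TpowM R A n)).toLinearMap ∘ₗ
            (TensorProduct.map (LinearMap.id : A ⊗[R] A →ₗ[R] A ⊗[R] A) (iterComul R A n)) =
          (TensorProduct.map (LinearMap.id : A →ₗ[R] A)
              (TensorProduct.map (LinearMap.id : A →ₗ[R] A) (iterComul R A n))) ∘ₗ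
            (TensorProduct.assoc R A A A).toLinearMap := by
        apply TensorProduct.ext_threefold
        intro x y z
        simp
      show (TensorProduct.assoc R A A (TpowM R A n)).toLinearMap ∘ₗ
        (TensorProduct.map (Coalgebra.comul (R := R) (A := A)) LinearMap.id) ∘ₗ
          iterComul R A (n+1) = _
      rw [iterComul_succ n]
      calc (TensorProduct.assoc R A A (TpowM R A n)).toLinearMap ∘ₗ
            (TensorProduct.map (Coalgebra.comul (R := R) (A := A)) LinearMap.id) ∘ₗ
            ((TensorProduct.map LinearMap.id (iterComul R A n)) ∘ₗ
              (Coalgebra.comul (R := R) (A := A)))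
          = (TensorProduct.assoc R A A (TpowM R A n)).toLinearMap ∘ₗ
            (((TensorProduct.map (Coalgebra.comul (R := R) (A := A))
                (LinearMap.id : TpowM R A n →ₗ[R] TpowM R A n)) ∘ₗ
              (TensorProduct.map (LinearMap.id : A →ₗ[R] A) (iterComul R A n))) ∘ₗ
              (Coalgebra.comul (R := R) (A := A))) := rfl
        _ = (TensorProduct.assoc R A A (TpowM R A n)).toLinearMap ∘ₗ
            (((TensorProduct.map (LinearMap.id : A ⊗[R] A →ₗ[R] A ⊗[R] A) (iterComul R A n)) ∘ₗ
              (TensorProduct.map (Coalgebra.comul (R := R) (A := A)) (LinearMap.id : A →ₗ[R] A))) ∘ₗ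
              (Coalgebra.comul (R := R) (A := A))) := by rw [h1]
        _ = ((TensorProduct.assoc R A A (TpowM R A n)).toLinearMap ∘ₗ
            (TensorProduct.map (LinearMap.id : A ⊗[R] A →ₗ[R] A ⊗[R] A) (iterComul R A n))) ∘ₗ
            ((TensorProduct.map (Coalgebra.comul (R := R) (A := A)) (LinearMap.id : A →ₗ[R] A)) ∘ₗ
              (Coalgebra.comul (R := R) (A := A))) := rfl
        _ = ((TensorProduct.map (LinearMap.id : A →ₗ[R] A)
              (TensorProduct.map (LinearMap.id : A →ₗ[R] A) (iterComul R A n))) ∘ₗ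
            (TensorProduct.assoc R A A A).toLinearMap) ∘ₗ
            ((TensorProduct.map (Coalgebra.comul (R := R) (A := A)) (LinearMap.id : A →ₗ[R] A)) ∘ₗ
              (Coalgebra.comul (R := R) (A := A))) := by rw [h2]
        _ = (TensorProduct.map (LinearMap.id : A →ₗ[R] A)
              (TensorProduct.map (LinearMap.id : A →ₗ[R] A) (iterComul R A n))) ∘ₗ
            ((TensorProduct.assoc R A A A).toLinearMap ∘ₗ
              (Coalgebra.comul (R := R) (A := A)).rTensor A ∘ₗ
              (Coalgebra.comul (R := R) (A := A))) := rfl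
        _ = (TensorProduct.map (LinearMap.id : A →ₗ[R] A)
              (TensorProduct.map (LinearMap.id : A →ₗ[R] A) (iterComul R A n))) ∘ₗ
            ((Coalgebra.comul (R := R) (A := A)).lTensor A ∘ₗ
              (Coalgebra.comul (R := R) (A := A))) := by rw [Coalgebra.coassoc]
        _ = ((TensorProduct.map (LinearMap.id : A →ₗ[R] A)
              (TensorProduct.map (LinearMap.id : A →ₗ[R] A) (iterComul R A n))) ∘ₗ
            (TensorProduct.map (LinearMap.id : A →ₗ[R] A) (Coalgebra.comul (R := R) (A := A)))) ∘ₗ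
              (Coalgebra.comul (R := R) (A := A)) := rfl
        _ = _ := by
            rw [← TensorProduct.map_comp, LinearMap.id_comp]
            rfl

lemma deltaMap_succ (n : ℕ) : deltaMap R A (n+1) =
    (TensorProduct.map (projCounit R A) (deltaMap R A n)) ∘ₗ (Coalgebra.comul (R := R) (A := A)) := by
  show (TensorProduct.map (projCounit R A) (projPow R A n)) ∘ₗ iterComul R A (n+1) = _
  rw [iterComul_succ]
  calc (TensorProduct.map (projCounit R A) (projPow R A n)) ∘ₗ
        ((TensorProduct.map LinearMap.id (iterComul R A n)) ∘ₗ (Coalgebra.comul (R := R) (A := A)))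
      = ((TensorProduct.map (projCounit R A) (projPow R A n)) ∘ₗ
        (TensorProduct.map LinearMap.id (iterComul R A n))) ∘ₗ
          (Coalgebra.comul (R := R) (A := A)) := rfl
    _ = _ := by rw [← TensorProduct.map_comp, LinearMap.comp_id]; rfl

lemma dm_allTrue : ∀ n : ℕ, dm R A n (fun _ => true) = deltaMap R A n
  | 0 => by
      show gmap R A true = _
      rw [gmap, if_pos rfl]
      show _ = projCounit R A ∘ₗ LinearMap.id
      rw [LinearMap.comp_id]
  | (n+1) => by
      show (TensorProduct.map (gmap R A true) (dm R A n (fun _ => true))) ∘ₗ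
        (Coalgebra.comul (R := R) (A := A)) = _
      rw [dm_allTrue n, deltaMap_succ, gmap, if_pos rfl]

-- chunk 3
lemma proj_mul (z w : A) : projCounit R A (z * w) =
    projCounit R A z * projCounit R A w
      + projCounit R A z * ((Algebra.linearMap R A) (Coalgebra.counit (R := R) w))
      + ((Algebra.linearMap R A) (Coalgebra.counit (R := R) z)) * projCounit R A w := by
  simp only [projCounit, LinearMap.sub_apply, LinearMap.id_apply, LinearMap.comp_apply,
    Algebra.linearMap_apply, Bialgebra.counit_mul, map_mul]
  noncomm_ring

lemma gmap_comm (b c : Bool) (h : ¬(b = true ∧ c = true)) (z w : A) :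
    gmap R A b z * gmap R A c w = gmap R A c w * gmap R A b z := by
  cases b with
  | false =>
      simp only [gmap, Bool.false_eq_true, if_false, LinearMap.comp_apply,
        Algebra.linearMap_apply]
      exact Algebra.commutes _ _
  | true =>
      cases c with
      | false =>
          simp only [gmap, Bool.false_eq_true, if_false, LinearMap.comp_apply,
            Algebra.linearMap_apply]
          exact (Algebra.commutes _ _).symm
      | true => exact absurd ⟨rfl, rfl⟩ h

lemma gmap_one_eq_zero : gmap R A true 1 = 0 := by
  rw [gmap, if_pos rfl]
  simp [projCounit, Algebra.linearMap_apply]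

lemma dm_one : ∀ (n : ℕ) (s : Fin (n+1) → Bool), (∃ i, s i = true) → dm R A n s (1 : A) = 0
  | 0, s, ⟨i, hi⟩ => by
      rw [Fin.eq_zero i] at hi
      rw [dm_zero, hi, gmap_one_eq_zero]
      rfl
  | (n+1), s, ⟨i, hi⟩ => by
      rw [dm_succ, Bialgebra.comul_one, Algebra.TensorProduct.one_def,
        TensorProduct.map_tmul]
      rcases Fin.eq_zero_or_eq_succ i with h0 | ⟨j, hj⟩
      · rw [h0] at hi
        rw [hi, gmap_one_eq_zero, TensorProduct.zero_tmul]
        rfl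
      · rw [hj] at hi
        rw [dm_one n (fun k => s k.succ) ⟨j, hi⟩, TensorProduct.tmul_zero]
        rfl

lemma mulT_dm_comm : ∀ (n : ℕ) (s t : Fin (n+1) → Bool),
    (∀ i, ¬(s i = true ∧ t i = true)) → ∀ u v : A,
    mulT R A n (dm R A n s u) (dm R A n t v) = mulT R A n (dm R A n t v) (dm R A n s u)
  | 0, s, t, h, u, v => gmap_comm R A _ _ (h 0) u v
  | (n+1), s, t, h, u, v => by
      rw [dm_succ, dm_succ]
      have key : ∀ z w : A ⊗[R] A,
          mulT R A (n+1) ((TensorProduct.map (gmap R A (s 0)) (dm R A n (fun i => s i.succ))) z)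
            ((TensorProduct.map (gmap R A (t 0)) (dm R A n (fun i => t i.succ))) w)
          = mulT R A (n+1)
            ((TensorProduct.map (gmap R A (t 0)) (dm R A n (fun i => t i.succ))) w)
            ((TensorProduct.map (gmap R A (s 0)) (dm R A n (fun i => s i.succ))) z) := by
        intro z w
        induction z using TensorProduct.induction_on with
        | zero => simp only [map_zero, mulT_succ_zero_l, mulT_succ_zero_r]
        | add z₁ z₂ ih₁ ih₂ => simp only [map_add, mulT_succ_add_l, mulT_succ_add_r, ih₁, ih₂]
        | tmul z₁ z₂ =>
            induction w using TensorProduct.induction_on with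
            | zero => simp only [map_zero, mulT_succ_zero_l, mulT_succ_zero_r]
            | add w₁ w₂ ih₁ ih₂ => simp only [map_add, mulT_succ_add_l, mulT_succ_add_r, ih₁, ih₂]
            | tmul w₁ w₂ =>
                rw [TensorProduct.map_tmul, TensorProduct.map_tmul, mulT_tmul, mulT_tmul,
                  gmap_comm R A _ _ (h 0),
                  mulT_dm_comm n (fun i => s i.succ) (fun i => t i.succ) (fun i => h i.succ)]
      exact key _ _

-- chunk 4
lemma gmap_true : gmap R A true = projCounit R A := by rw [gmap, if_pos rfl]

lemma gmap_false : gmap R A false =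
    (Algebra.linearMap R A) ∘ₗ (Coalgebra.counit (R := R) (A := A)) := by
  rw [gmap, if_neg (by simp)]

lemma mulT_zero_apply (x y : A) : mulT R A 0 x y = x * y := rfl

lemma ite_add_zero' {M : Type*} [AddZeroClass M] (P : Prop) [Decidable P] (a b : M) :
    (if P then a + b else 0) = (if P then a else 0) + (if P then b else 0) := by
  split_ifs <;> simp

lemma sum_mask_one {M : Type*} [AddCommMonoid M] (f : (Fin 1 → Bool) → M) :
    ∑ s, f s = f (fun _ => true) + f (fun _ => false) := by
  rw [← (Equiv.funUnique (Fin 1) Bool).symm.sum_comp f]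
  rw [Fintype.sum_bool]
  rfl

lemma dm_cons (n : ℕ) (b : Bool) (s : Fin (n+1) → Bool) (u : A) :
    dm R A (n+1) (Fin.cons b s) u =
      (TensorProduct.map (gmap R A b) (dm R A n s)) (Coalgebra.comul u) := by
  rw [dm_succ]
  simp only [Fin.cons_zero, Fin.cons_succ]
  rfl

theorem expansion : ∀ (n : ℕ) (u v : A),
    dm R A n (fun _ => true) (u * v) =
      ∑ p : ((Fin (n+1) → Bool) × (Fin (n+1) → Bool)),
        if (∀ i, p.1 i = true ∨ p.2 i = true)
        then mulT R A n (dm R A n p.1 u) (dm R A n p.2 v) else 0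
  | 0, u, v => by
      rw [Fintype.sum_prod_type, sum_mask_one, sum_mask_one, sum_mask_one]
      simp only [Fin.forall_fin_one, true_or, or_true, or_self, Bool.false_eq_true, or_false,
        false_or, if_true, if_false]
      simp only [dm_zero, mulT_zero_apply, gmap_true, gmap_false, LinearMap.comp_apply]
      rw [proj_mul]
      simp [add_assoc]
      erw [add_zero]
      exact (add_assoc _ _ _).symm
  | (n+1), u, v => by
      have hG : ∀ z w : A ⊗[R] A,
          (TensorProduct.map (gmap R A true) (dm R A n (fun _ => true))) (z * w) =
          ∑ b : Bool, ∑ c : Bool, ∑ p : ((Fin (n+1) → Bool) × (Fin (n+1) → Bool)),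
            if ((∀ i, p.1 i = true ∨ p.2 i = true) ∧ (b = true ∨ c = true)) then
              mulT R A (n+1) ((TensorProduct.map (gmap R A b) (dm R A n p.1)) z)
                ((TensorProduct.map (gmap R A c) (dm R A n p.2)) w)
            else 0 := by
        intro z w
        induction z using TensorProduct.induction_on with
        | zero => simp [mulT_succ_zero_l]; rfl
        | add z₁ z₂ ih₁ ih₂ =>
            simp only [add_mul, map_add, LinearMap.add_apply, mulT_succ_add_l, ite_add_zero',
              Finset.sum_add_distrib]
            rw [ih₁, ih₂]
            rfl
        | tmul z₁ z₂ =>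
            induction w using TensorProduct.induction_on with
            | zero => simp [mulT_succ_zero_r]; rfl
            | add w₁ w₂ jh₁ jh₂ =>
                simp only [mul_add, map_add, LinearMap.map_add, mulT_succ_add_r, ite_add_zero',
                  Finset.sum_add_distrib]
                rw [jh₁, jh₂]
                rfl
            | tmul w₁ w₂ =>
                rw [Algebra.TensorProduct.tmul_mul_tmul, TensorProduct.map_tmul, gmap_true,
                  proj_mul, expansion n, TensorProduct.tmul_sum]
                rw [Fintype.sum_bool, Fintype.sum_bool, Fintype.sum_bool]
                simp only [true_or, or_true, Bool.false_eq_true, or_self, and_true, and_false,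
                  if_false, ↓reduceIte, TensorProduct.map_tmul, mulT_tmul, Finset.sum_const_zero, add_zero,
                  gmap_true, gmap_false, LinearMap.comp_apply]
                rw [← Finset.sum_add_distrib, ← Finset.sum_add_distrib]
                refine Finset.sum_congr rfl fun p _ => ?_
                split_ifs with h
                · erw [if_pos h, if_pos h, if_pos h]
                  rw [add_tmul, add_tmul]
                  rfl
                · simp [h]
                  rfl
      rw [dm_succ, Bialgebra.comul_mul, hG]
      rw [← Equiv.sum_comp (Equiv.prodCongr (Fin.consEquiv (fun _ : Fin (n+2) => Bool))
        (Fin.consEquiv (fun _ : Fin (n+2) => Bool)))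
        (fun P : ((Fin (n+2) → Bool) × (Fin (n+2) → Bool)) =>
          if (∀ i, P.1 i = true ∨ P.2 i = true)
          then mulT R A (n+1) (dm R A (n+1) P.1 u) (dm R A (n+1) P.2 v) else 0)]
      simp only [Fintype.sum_prod_type]
      refine Finset.sum_congr rfl fun b _ => ?_
      rw [Finset.sum_comm]
      refine Finset.sum_congr rfl fun s _ => ?_
      refine Finset.sum_congr rfl fun c _ => ?_
      refine Finset.sum_congr rfl fun t _ => ?_
      simp only [Equiv.prodCongr_apply, Prod.map, Fin.consEquiv_apply, dm_cons,
        Fin.forall_fin_succ, Fin.cons_zero, Fin.cons_succ]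
      congr 1
      rw [and_comm]

-- chunk 5 : insertion and deletion
noncomputable def ins : (n : ℕ) → (p : ℕ) → (TpowM R A n →ₗ[R] TpowM R A (n+1))
  | n, 0 => TensorProduct.mk R A (TpowM R A n) 1
  | 0, (_+1) => (TensorProduct.mk R A A).flip 1
  | (n+1), (p+1) => TensorProduct.map LinearMap.id (ins n p)

lemma dm_false_head (n : ℕ) (s : Fin (n+2) → Bool) (h : s 0 = false) (u : A) :
    dm R A (n+1) s u =
      (TensorProduct.mk R A (TpowM R A n) 1) (dm R A n (fun j => s j.succ) u) := by
  rw [dm_succ, h, gmap_false]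
  have hfac : (TensorProduct.map
        ((Algebra.linearMap R A) ∘ₗ (Coalgebra.counit (R := R) (A := A)))
        (dm R A n (fun j => s j.succ)))
      = (TensorProduct.map (Algebra.linearMap R A) (dm R A n (fun j => s j.succ))) ∘ₗ
        ((Coalgebra.counit (R := R) (A := A)).rTensor A) := by
    rw [rTensor_eq_map, ← TensorProduct.map_comp, LinearMap.comp_id]
  rw [hfac, LinearMap.comp_apply, Coalgebra.rTensor_counit_comul, TensorProduct.map_tmul]
  simp only [Algebra.linearMap_apply, map_one]
  rfl

lemma dm_false_snd (s : Fin 2 → Bool) (h : s 1 = false) (u : A) :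
    dm R A 1 s u = ((TensorProduct.mk R A A).flip 1) (gmap R A (s 0) u) := by
  rw [dm_succ]
  have h0 : dm R A 0 (fun i : Fin 1 => s i.succ) = gmap R A (s 1) := rfl
  rw [h0, h, gmap_false]
  have hfac : (TensorProduct.map (gmap R A (s 0))
        ((Algebra.linearMap R A) ∘ₗ (Coalgebra.counit (R := R) (A := A))))
      = (TensorProduct.map (gmap R A (s 0)) (Algebra.linearMap R A)) ∘ₗ
        ((Coalgebra.counit (R := R) (A := A)).lTensor A) := by
    rw [lTensor_eq_map, ← TensorProduct.map_comp, LinearMap.comp_id]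
  erw [hfac]
  show (TensorProduct.map (gmap R A (s 0)) (Algebra.linearMap R A))
      (((Coalgebra.counit (R := R) (A := A)).lTensor A) (Coalgebra.comul u)) = _
  rw [Coalgebra.lTensor_counit_comul, TensorProduct.map_tmul]
  simp only [Algebra.linearMap_apply, map_one]
  rfl

lemma dm_delete : ∀ (n : ℕ) (p : Fin (n+2)) (s : Fin (n+2) → Bool), s p = false →
    ∀ u : A, dm R A (n+1) s u = ins R A n p.val (dm R A n (fun j => s (p.succAbove j)) u)
  | 0, p, s, hp, u => by
      induction p using Fin.cases with
      | zero =>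
          rw [dm_false_head R A 0 s hp u]
          have : (fun j : Fin 1 => s ((0 : Fin 2).succAbove j)) = fun j : Fin 1 => s j.succ := by
            funext j; rw [Fin.succAbove_zero]
          rw [this]
          rfl
      | succ q =>
          have hq : q = 0 := Fin.eq_zero q
          subst hq
          have h1 : s 1 = false := hp
          rw [dm_false_snd R A s h1 u]
          have : (fun j : Fin 1 => s ((Fin.succ 0).succAbove j)) = fun _ : Fin 1 => s 0 := by
            funext j
            have hj : j = 0 := Fin.eq_zero j
            subst hj
            rw [Fin.succ_succAbove_zero]
          rw [this]
          rfl
  | (n+1), p, s, hp, u => by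
      induction p using Fin.cases with
      | zero =>
          rw [dm_false_head R A (n+1) s hp u]
          have : (fun j : Fin (n+2) => s ((0 : Fin (n+3)).succAbove j))
              = fun j : Fin (n+2) => s j.succ := by
            funext j; rw [Fin.succAbove_zero]
          rw [this]
          rfl
      | succ q =>
          have htail : (fun i : Fin (n+2) => s i.succ) q = false := hp
          have hfun : dm R A (n+1) (fun i => s i.succ)
              = (ins R A n q.val) ∘ₗ
                (dm R A n (fun j => s ((q.succAbove j)).succ)) := by
            apply LinearMap.ext
            intro u'
            exact dm_delete n q (fun i => s i.succ) htail u'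
          rw [dm_succ, hfun]
          have hsplit : (TensorProduct.map (gmap R A (s 0))
                ((ins R A n q.val) ∘ₗ (dm R A n (fun j => s ((q.succAbove j)).succ))))
              = (TensorProduct.map LinearMap.id (ins R A n q.val)) ∘ₗ
                (TensorProduct.map (gmap R A (s 0))
                  (dm R A n (fun j => s ((q.succAbove j)).succ))) := by
            rw [← TensorProduct.map_comp, LinearMap.id_comp]
          rw [hsplit]
          have hins : ins R A (n+1) ((Fin.succ q).val)
              = TensorProduct.map LinearMap.id (ins R A n q.val) := by
            rw [Fin.val_succ]
            rfl
          rw [hins, dm_succ]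
          have hz : (Fin.succ q).succAbove 0 = 0 := Fin.succ_succAbove_zero q
          rw [hz]
          have hmasks : (fun i : Fin (n+1) => s ((Fin.succ q).succAbove i.succ))
              = fun j : Fin (n+1) => s ((q.succAbove j)).succ := by
            funext i
            rw [Fin.succ_succAbove_succ]
          rw [hmasks]
          rfl

-- chunk 5b : divisibility along masks
lemma dm_divisible (r : R) (a : A)
    (ha : ∀ k : ℕ, ∃ y : TpowM R A k, deltaMap R A k a = r^(k+1) • y) :
    ∀ (f n : ℕ) (s : Fin (n+1) → Bool), (∑ i, (if s i = true then (0:ℕ) else 1)) = f →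
    ∃ w : TpowM R A n, dm R A n s a = r ^ (∑ i, (if s i = true then (1:ℕ) else 0)) • w := by
  intro f
  induction f with
  | zero =>
      intro n s hs
      have hall : ∀ i, s i = true := by
        intro i
        by_contra hi
        have h0 := Finset.sum_eq_zero_iff.mp hs i (Finset.mem_univ i)
        rw [if_neg hi] at h0
        exact one_ne_zero h0
      have hfun : s = fun _ => true := funext hall
      subst hfun
      rw [dm_allTrue]
      simpa using ha n
  | succ f ih =>
      intro n s hs
      have hex : ∃ p, s p = false := by
        by_contra h
        push_neg at h
        have : (∑ i, (if s i = true then (0:ℕ) else 1)) = 0 := by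
          apply Finset.sum_eq_zero
          intro i _
          rw [if_pos (by cases hsi : s i with
            | true => rfl
            | false => exact absurd hsi (h i))]
        omega
      obtain ⟨p, hp⟩ := hex
      cases n with
      | zero =>
          have hp0 : p = 0 := Fin.eq_zero p
          subst hp0
          have hcnt : (∑ i : Fin 1, (if s i = true then (1:ℕ) else 0)) = 0 := by
            rw [Fin.sum_univ_one, hp]
            rfl
          rw [hcnt, pow_zero]
          exact ⟨dm R A 0 s a, (one_smul _ _).symm⟩
      | succ m =>
          rw [dm_delete R A m p s hp a]
          have hfalse : (∑ j : Fin (m+1), (if s (p.succAbove j) = true then (0:ℕ) else 1)) = f := by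
            have h2 := Fin.sum_univ_succAbove (fun i => if s i = true then (0:ℕ) else 1) p
            rw [h2, hp] at hs
            simp only [Bool.false_eq_true, if_false] at hs
            omega
          obtain ⟨w, hw⟩ := ih m (fun j => s (p.succAbove j)) hfalse
          have htrue : (∑ j : Fin (m+1), (if s (p.succAbove j) = true then (1:ℕ) else 0))
              = ∑ i : Fin (m+2), (if s i = true then (1:ℕ) else 0) := by
            rw [Fin.sum_univ_succAbove (fun i => if s i = true then (1:ℕ) else 0) p, hp]
            simp
          rw [hw, map_smul, htrue]
          exact ⟨ins R A m p.val w, rfl⟩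

-- chunk 6 : commutator algebra
lemma commutator_proj (x z : A) :
    projCounit R A x * projCounit R A z - projCounit R A z * projCounit R A x
      = x * z - z * x := by
  simp only [projCounit, LinearMap.sub_apply, LinearMap.id_apply, LinearMap.comp_apply,
    Algebra.linearMap_apply, Algebra.algebraMap_eq_smul_one]
  simp only [sub_mul, mul_sub, smul_sub, smul_mul_assoc, mul_smul_comm, one_mul, mul_one, smul_smul]
  rw [mul_comm (Coalgebra.counit (R := R) x) (Coalgebra.counit (R := R) z)]
  abel

lemma smul_commutator (r : R) (y₁ y₂ : A) :
    (r • y₁) * (r • y₂) - (r • y₂) * (r • y₁) = r • (r • (y₁ * y₂ - y₂ * y₁)) := by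
  simp only [smul_mul_assoc, mul_smul_comm, smul_sub, smul_smul]

-- chunk 7 : the per-term estimate
lemma key_term (r : R) (a b y₁ y₂ : A)
    (ha : ∀ k : ℕ, ∃ y : TpowM R A k, deltaMap R A k a = r^(k+1) • y)
    (hb : ∀ k : ℕ, ∃ y : TpowM R A k, deltaMap R A k b = r^(k+1) • y)
    (hy₁ : projCounit R A a = r • y₁) (hy₂ : projCounit R A b = r • y₂)
    (n : ℕ) (s t : Fin (n+1) → Bool) :
    ∃ w : TpowM R A n,
      r • ((if (∀ i, s i = true ∨ t i = true)
              then mulT R A n (dm R A n s y₁) (dm R A n t y₂) else 0)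
          - (if (∀ i, t i = true ∨ s i = true)
              then mulT R A n (dm R A n t y₂) (dm R A n s y₁) else 0))
        = r^(n+1) • w := by
  by_cases hcov : ∀ i, s i = true ∨ t i = true
  · have hcov' : ∀ i, t i = true ∨ s i = true := fun i => (hcov i).symm
    rw [if_pos hcov, if_pos hcov']
    by_cases hdis : ∀ i, ¬(s i = true ∧ t i = true)
    · rw [mulT_dm_comm R A n s t hdis y₁ y₂, sub_self, smul_zero]
      exact ⟨0, by rw [smul_zero]⟩
    · push_neg at hdis
      obtain ⟨i₀, hs₀, ht₀⟩ := hdis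
      obtain ⟨ws, hws⟩ := dm_divisible R A r a ha _ n s rfl
      obtain ⟨wt, hwt⟩ := dm_divisible R A r b hb _ n t rfl
      set cs := ∑ i, (if s i = true then (1:ℕ) else 0) with hcs
      set ct := ∑ i, (if t i = true then (1:ℕ) else 0) with hct
      have hcs1 : 1 ≤ cs := by
        have h := Finset.single_le_sum
          (f := fun i => if s i = true then (1:ℕ) else 0)
          (fun i _ => Nat.zero_le _) (Finset.mem_univ i₀)
        simp only [hs₀, if_true] at h
        exact h
      have hct1 : 1 ≤ ct := by
        have h := Finset.single_le_sum
          (f := fun i => if t i = true then (1:ℕ) else 0)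
          (fun i _ => Nat.zero_le _) (Finset.mem_univ i₀)
        simp only [ht₀, if_true] at h
        exact h
      have hsum : n + 2 ≤ cs + ct := by
        have h1 : ∀ i ∈ Finset.univ, (1:ℕ) ≤
            (if s i = true then (1:ℕ) else 0) + (if t i = true then 1 else 0) := by
          intro i _
          rcases hcov i with h | h <;> simp [h]
        have h2 := Finset.sum_lt_sum h1
          ⟨i₀, Finset.mem_univ i₀, by simp [hs₀, ht₀]⟩
        rw [Finset.sum_add_distrib] at h2
        simp only [Finset.sum_const, Finset.card_univ, Fintype.card_fin, smul_eq_mul,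
          mul_one] at h2
        omega
      have hπa : dm R A n s (projCounit R A a) = dm R A n s a := by
        have hpr : projCounit R A a = a - (Coalgebra.counit (R := R) a) • (1:A) := by
          simp [projCounit, Algebra.algebraMap_eq_smul_one]
        rw [hpr, map_sub, map_smul, dm_one R A n s ⟨i₀, hs₀⟩, smul_zero, sub_zero]
      have hπb : dm R A n t (projCounit R A b) = dm R A n t b := by
        have hpr : projCounit R A b = b - (Coalgebra.counit (R := R) b) • (1:A) := by
          simp [projCounit, Algebra.algebraMap_eq_smul_one]
        rw [hpr, map_sub, map_smul, dm_one R A n t ⟨i₀, ht₀⟩, smul_zero, sub_zero]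
      have hXs : r • dm R A n s y₁ = r ^ cs • ws := by
        rw [← map_smul, ← hy₁, hπa, hws]
      have hXt : r • dm R A n t y₂ = r ^ ct • wt := by
        rw [← map_smul, ← hy₂, hπb, hwt]
      have e1 : r • mulT R A n (dm R A n s y₁) (dm R A n t y₂)
          = r ^ (cs + ct - 1) • mulT R A n ws wt := by
        calc r • mulT R A n (dm R A n s y₁) (dm R A n t y₂)
            = mulT R A n (r • dm R A n s y₁) (dm R A n t y₂) := by
              rw [map_smul, LinearMap.smul_apply]
          _ = mulT R A n (r ^ cs • ws) (dm R A n t y₂) := by rw [hXs]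
          _ = r ^ cs • mulT R A n ws (dm R A n t y₂) := by
              rw [map_smul, LinearMap.smul_apply]
          _ = r ^ (cs-1) • (r • mulT R A n ws (dm R A n t y₂)) := by
              rw [← mul_smul, ← pow_succ, Nat.sub_add_cancel hcs1]
          _ = r ^ (cs-1) • mulT R A n ws (r • dm R A n t y₂) := by rw [← map_smul]
          _ = r ^ (cs-1) • (r ^ ct • mulT R A n ws wt) := by rw [hXt, map_smul]
          _ = r ^ (cs + ct - 1) • mulT R A n ws wt := by
              rw [← mul_smul, ← pow_add]
              have : cs - 1 + ct = cs + ct - 1 := by omega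
              rw [this]
      have e2 : r • mulT R A n (dm R A n t y₂) (dm R A n s y₁)
          = r ^ (cs + ct - 1) • mulT R A n wt ws := by
        calc r • mulT R A n (dm R A n t y₂) (dm R A n s y₁)
            = mulT R A n (r • dm R A n t y₂) (dm R A n s y₁) := by
              rw [map_smul, LinearMap.smul_apply]
          _ = mulT R A n (r ^ ct • wt) (dm R A n s y₁) := by rw [hXt]
          _ = r ^ ct • mulT R A n wt (dm R A n s y₁) := by
              rw [map_smul, LinearMap.smul_apply]
          _ = r ^ (ct-1) • (r • mulT R A n wt (dm R A n s y₁)) := by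
              rw [← mul_smul, ← pow_succ, Nat.sub_add_cancel hct1]
          _ = r ^ (ct-1) • mulT R A n wt (r • dm R A n s y₁) := by rw [← map_smul]
          _ = r ^ (ct-1) • (r ^ cs • mulT R A n wt ws) := by rw [hXs, map_smul]
          _ = r ^ (cs + ct - 1) • mulT R A n wt ws := by
              rw [← mul_smul, ← pow_add]
              have : ct - 1 + cs = cs + ct - 1 := by omega
              rw [this]
      refine ⟨r ^ (cs + ct - 1 - (n+1)) • (mulT R A n ws wt - mulT R A n wt ws), ?_⟩
      rw [smul_sub, e1, e2, ← smul_sub, smul_smul, ← pow_add]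
      have : n + 1 + (cs + ct - 1 - (n+1)) = cs + ct - 1 := by omega
      rw [this]
  · have hcov' : ¬ (∀ i, t i = true ∨ s i = true) := fun h => hcov (fun i => (h i).symm)
    rw [if_neg hcov, if_neg hcov']
    exact ⟨0, by simp⟩


/-- The Drinfeld–Gavarini dual of a Hopf algebra `A` over `ℂ[ħ]` (`ħ = X`):
`A' = { a ∈ A : δ_n(a) ∈ ħ^n A^{⊗n} for all n ≥ 1 }` (here `deltaMap _ A (n-1) = δ_n`). -/
noncomputable def gavariniDual (A : Type*) [Ring A] [HopfAlgebra (Polynomial ℂ) A] :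
    Set A :=
  {a : A | ∀ n : ℕ, ∃ y : TpowM (Polynomial ℂ) A n,
    deltaMap (Polynomial ℂ) A n a = (Polynomial.X : Polynomial ℂ) ^ (n + 1) • y}


/-- For any `a, b` in the Drinfeld–Gavarini dual `A'` of a Hopf algebra `A` over `ℂ[ħ]`,
the commutator `[a,b] = ab − ba` lies in `ħ·A'`. -/
theorem stmt16 (A : Type*) [Ring A] [HopfAlgebra (Polynomial ℂ) A] :
    ∀ a ∈ gavariniDual A, ∀ b ∈ gavariniDual A,
      ∃ c ∈ gavariniDual A, a * b - b * a = (Polynomial.X : Polynomial ℂ) • c := by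
  intro a ha b hb
  set X : Polynomial ℂ := Polynomial.X with hX
  obtain ⟨y₁0, hy₁⟩ := ha 0
  obtain ⟨y₂0, hy₂⟩ := hb 0
  let y₁ : A := y₁0
  let y₂ : A := y₂0
  have hy₁' : projCounit (Polynomial ℂ) A a = X • y₁ := by
    rw [pow_one] at hy₁
    exact hy₁
  have hy₂' : projCounit (Polynomial ℂ) A b = X • y₂ := by
    rw [pow_one] at hy₂
    exact hy₂
  refine ⟨X • (y₁ * y₂ - y₂ * y₁), ?_, ?_⟩
  · -- membership in the dual
    intro n
    have hd : deltaMap (Polynomial ℂ) A n (X • (y₁ * y₂ - y₂ * y₁))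
        = X • (deltaMap (Polynomial ℂ) A n (y₁ * y₂)
            - deltaMap (Polynomial ℂ) A n (y₂ * y₁)) := by
      rw [map_smul, map_sub]
    rw [hd, ← dm_allTrue, expansion, expansion]
    rw [← Equiv.sum_comp
      (Equiv.prodComm ((Fin (n+1) → Bool)) ((Fin (n+1) → Bool)))
      (fun p : ((Fin (n+1) → Bool) × (Fin (n+1) → Bool)) =>
        if (∀ i, p.1 i = true ∨ p.2 i = true)
        then mulT (Polynomial ℂ) A n (dm (Polynomial ℂ) A n p.1 y₂)
          (dm (Polynomial ℂ) A n p.2 y₁) else 0)]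
    simp only [Equiv.prodComm_apply, Prod.fst_swap, Prod.snd_swap]
    rw [← Finset.sum_sub_distrib, Finset.smul_sum]
    have hterm : ∀ p : ((Fin (n+1) → Bool) × (Fin (n+1) → Bool)),
        ∃ w : TpowM (Polynomial ℂ) A n,
          X • ((if (∀ i, p.1 i = true ∨ p.2 i = true)
                  then mulT (Polynomial ℂ) A n (dm (Polynomial ℂ) A n p.1 y₁)
                    (dm (Polynomial ℂ) A n p.2 y₂) else 0)
              - (if (∀ i, p.2 i = true ∨ p.1 i = true)
                  then mulT (Polynomial ℂ) A n (dm (Polynomial ℂ) A n p.2 y₂)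
                    (dm (Polynomial ℂ) A n p.1 y₁) else 0))
            = X^(n+1) • w :=
      fun p => key_term (Polynomial ℂ) A X a b y₁ y₂ ha hb hy₁' hy₂' n p.1 p.2
    choose wf hwf using hterm
    refine ⟨∑ p, wf p, ?_⟩
    rw [Finset.smul_sum]
    exact Finset.sum_congr rfl fun p _ => hwf p
  · -- the commutator identity
    rw [← commutator_proj (Polynomial ℂ) A a b, hy₁', hy₂', smul_commutator]
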